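/- Let a < b be real numbers, W : [a,b] → ℝ continuous, λ ∈ ℝ, C > 0, and v : [a,b] → ℝ twice continuously differentiable with v(a) = v(b) = 0, v''(x) = (W(x) − 2λ)·v(x) for all x ∈ [a,b], ∫_a^b v(x)² dx = 1, and W(x) ≥ −C for all x ∈ [a,b]. Then for every x ∈ [a,b], v(x)² ≤ 2(2λ + C + 1) / √( inf_{y ∈ [x,b]} (W(y) + C + 1) ). -/

import Mathlib

open MeasureTheory intervalIntegral

set_option maxHeartbeats 1000000 in
theorem stmt_2 (a b : ℝ) (hab : a < b) (W v v' v'' : ℝ → ℝ) (lam C : ℝ)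
    (hC : 0 < C)
    (hW : ContinuousOn W (Set.Icc a b))
    (hv' : ∀ x ∈ Set.Icc a b, HasDerivAt v (v' x) x)
    (hv'' : ∀ x ∈ Set.Icc a b, HasDerivAt v' (v'' x) x)
    (hv''cont : ContinuousOn v'' (Set.Icc a b))
    (hva : v a = 0) (hvb : v b = 0)
    (hode : ∀ x ∈ Set.Icc a b, v'' x = (W x - 2 * lam) * v x)
    (hnorm : (∫ x in a..b, (v x) ^ 2) = 1)
    (hWlb : ∀ x ∈ Set.Icc a b, -C ≤ W x) :
    ∀ x ∈ Set.Icc a b,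
      (v x) ^ 2 ≤ 2 * (2 * lam + C + 1) /
        Real.sqrt (sInf ((fun y => W y + C + 1) '' Set.Icc x b)) := by
  have huIcc : Set.uIcc a b = Set.Icc a b := Set.uIcc_of_le hab.le
  have hvc : ContinuousOn v (Set.Icc a b) := fun y hy =>
    (hv' y hy).continuousAt.continuousWithinAt
  have hv'c : ContinuousOn v' (Set.Icc a b) := fun y hy =>
    (hv'' y hy).continuousAt.continuousWithinAt
  -- integrability of continuous functions on subintervals
  have hint : ∀ (f : ℝ → ℝ), ContinuousOn f (Set.Icc a b) → ∀ c ∈ Set.Icc a b,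
      ∀ d ∈ Set.Icc a b, IntervalIntegrable f volume c d := by
    intro f hf c hc d hd
    exact (hf.mono (Set.uIcc_subset_Icc hc hd)).intervalIntegrable
  have ha : a ∈ Set.Icc a b := Set.left_mem_Icc.2 hab.le
  have hb : b ∈ Set.Icc a b := Set.right_mem_Icc.2 hab.le
  set E : ℝ := 2 * lam + C + 1 with hEdef
  -- continuity facts
  have hWvc : ContinuousOn (fun y => (W y + C + 1) * v y ^ 2) (Set.Icc a b) :=
    ((hW.add continuousOn_const).add continuousOn_const).mul (hvc.pow 2)
  have hv2c : ContinuousOn (fun y => v y ^ 2) (Set.Icc a b) := hvc.pow 2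
  have hv'2c : ContinuousOn (fun y => v' y ^ 2) (Set.Icc a b) := hv'c.pow 2
  have hvv''c : ContinuousOn (fun y => v y * v'' y) (Set.Icc a b) := hvc.mul hv''cont
  -- integration by parts
  have ibp : (∫ y in a..b, v' y * v' y + v y * v'' y) = v b * v' b - v a * v' a := by
    apply integral_deriv_mul_eq_sub (fun y hy => hv' y (huIcc ▸ hy))
      (fun y hy => hv'' y (huIcc ▸ hy))
    · exact hint v' hv'c a ha b hb
    · exact hint v'' hv''cont a ha b hb
  have ibp0 : (∫ y in a..b, v' y ^ 2) + (∫ y in a..b, v y * v'' y) = 0 := by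
    have hadd := integral_add (μ := volume) (a := a) (b := b)
      (f := fun y => v' y ^ 2) (g := fun y => v y * v'' y)
      (hint _ hv'2c a ha b hb) (hint _ hvv''c a ha b hb)
    have hcongr : (∫ y in a..b, v' y ^ 2 + v y * v'' y)
        = (∫ y in a..b, v' y * v' y + v y * v'' y) := by
      apply integral_congr; intro y hy; ring
    rw [← hadd, hcongr, ibp, hva, hvb]; ring
  -- energy identity : ∫ v'^2 + ∫ (W+C+1) v^2 = E
  have energy : (∫ y in a..b, v' y ^ 2) + (∫ y in a..b, (W y + C + 1) * v y ^ 2) = E := by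
    have h1 : (∫ y in a..b, v y * v'' y)
        = (∫ y in a..b, ((W y + C + 1) * v y ^ 2 - E * v y ^ 2)) := by
      apply integral_congr
      intro y hy
      rw [huIcc] at hy
      dsimp only
      rw [hode y hy, hEdef]; ring
    have h2 : (∫ y in a..b, ((W y + C + 1) * v y ^ 2 - E * v y ^ 2))
        = (∫ y in a..b, (W y + C + 1) * v y ^ 2) - E * (∫ y in a..b, v y ^ 2) := by
      rw [integral_sub (hint _ hWvc a ha b hb)
        ((hint _ hv2c a ha b hb).const_mul E), intervalIntegral.integral_const_mul]
    rw [h1, h2, hnorm] at ibp0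
    linarith
  -- basic positivity
  have hWC1 : ∀ y ∈ Set.Icc a b, (1:ℝ) ≤ W y + C + 1 := by
    intro y hy; have := hWlb y hy; linarith
  have hBge1 : (1:ℝ) ≤ ∫ y in a..b, (W y + C + 1) * v y ^ 2 := by
    conv_lhs => rw [← hnorm]
    apply integral_mono_on hab.le (hint _ hv2c a ha b hb) (hint _ hWvc a ha b hb)
    intro y hy
    nlinarith [hWC1 y hy, sq_nonneg (v y)]
  have hAnn : (0:ℝ) ≤ ∫ y in a..b, v' y ^ 2 :=
    integral_nonneg hab.le (fun y hy => sq_nonneg _)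
  have hE1 : (1:ℝ) ≤ E := by linarith
  have hApos : (∫ y in a..b, v' y ^ 2) ≤ E := by linarith
  -- main part
  intro x hx
  have hxb : x ≤ b := hx.2
  have hsub : Set.Icc x b ⊆ Set.Icc a b := Set.Icc_subset_Icc hx.1 le_rfl
  have huIcc2 : Set.uIcc x b = Set.Icc x b := Set.uIcc_of_le hxb
  set m : ℝ := sInf ((fun y => W y + C + 1) '' Set.Icc x b) with hmdef
  have hne : ((fun y => W y + C + 1) '' Set.Icc x b).Nonempty :=
    (Set.nonempty_Icc.2 hxb).image _
  have hbdd : BddBelow ((fun y => W y + C + 1) '' Set.Icc x b) := by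
    refine ⟨1, ?_⟩
    rintro z ⟨y, hy, rfl⟩
    exact hWC1 y (hsub hy)
  have hm1 : (1:ℝ) ≤ m := le_csInf hne (by rintro z ⟨y, hy, rfl⟩; exact hWC1 y (hsub hy))
  have hmle : ∀ y ∈ Set.Icc x b, m ≤ W y + C + 1 := fun y hy =>
    csInf_le hbdd ⟨y, hy, rfl⟩
  -- tail integrals
  set P : ℝ := ∫ y in x..b, v y ^ 2 with hPdef
  set Q : ℝ := ∫ y in x..b, v' y ^ 2 with hQdef
  have hPnn : 0 ≤ P := integral_nonneg hxb (fun y hy => sq_nonneg _)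
  have hQnn : 0 ≤ Q := integral_nonneg hxb (fun y hy => sq_nonneg _)
  have hQE : Q ≤ E := by
    have hsplit := integral_add_adjacent_intervals (a := a) (b := x) (c := b)
      (f := fun y => v' y ^ 2) (hint _ hv'2c a ha x hx) (hint _ hv'2c x hx b hb)
    have h0 : (0:ℝ) ≤ ∫ y in a..x, v' y ^ 2 :=
      integral_nonneg hx.1 (fun y hy => sq_nonneg _)
    have : Q ≤ ∫ y in a..b, v' y ^ 2 := by rw [← hsplit]; linarith
    linarith
  have hPE : m * P ≤ E := by
    have h1 : m * P ≤ ∫ y in x..b, (W y + C + 1) * v y ^ 2 := by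
      rw [hPdef, ← intervalIntegral.integral_const_mul]
      apply integral_mono_on hxb ((hint _ hv2c x hx b hb).const_mul m)
        (hint _ hWvc x hx b hb)
      intro y hy
      exact mul_le_mul_of_nonneg_right (hmle y hy) (sq_nonneg _)
    have hsplit := integral_add_adjacent_intervals (a := a) (b := x) (c := b)
      (f := fun y => (W y + C + 1) * v y ^ 2) (hint _ hWvc a ha x hx) (hint _ hWvc x hx b hb)
    have h0 : (0:ℝ) ≤ ∫ y in a..x, (W y + C + 1) * v y ^ 2 := by
      apply integral_nonneg hx.1
      intro y hy
      have := hWC1 y (Set.Icc_subset_Icc le_rfl hx.2 hy)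
      nlinarith [sq_nonneg (v y)]
    have h2 : (∫ y in x..b, (W y + C + 1) * v y ^ 2)
        ≤ ∫ y in a..b, (W y + C + 1) * v y ^ 2 := by rw [← hsplit]; linarith
    nlinarith [energy, hAnn]
  have hmpos : 0 < m := lt_of_lt_of_le one_pos hm1
  have hPle : P ≤ E / m := by
    rw [le_div_iff₀ hmpos]; linarith [hPE]
  -- FTC : v x ^ 2 = - ∫ 2 v v'
  have hftc : (∫ y in x..b, 2 * v y * v' y) = - v x ^ 2 := by
    have := integral_eq_sub_of_hasDerivAt (f := fun y => v y ^ 2)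
      (f' := fun y => 2 * v y * v' y) (a := x) (b := b) ?_ ?_
    · rw [this, hvb]; ring
    · intro y hy
      rw [huIcc2] at hy
      have := (hv' y (hsub hy)).fun_pow 2
      simpa [mul_comm, mul_assoc, mul_left_comm] using this
    · have h2vv' : ContinuousOn (fun y => 2 * v y * v' y) (Set.Icc a b) :=
        (continuousOn_const.mul hvc).mul hv'c
      exact hint _ h2vv' x hx b hb
  -- Cauchy–Schwarz
  set R : ℝ := ∫ y in x..b, v y * v' y with hRdef
  have hvv'c : ContinuousOn (fun y => v y * v' y) (Set.Icc a b) := hvc.mul hv'c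
  have hCS : R ^ 2 ≤ P * Q := by
    have key : ∀ t : ℝ, 0 ≤ P * (t * t) + (2 * R) * t + Q := by
      intro t
      have hnn : 0 ≤ ∫ y in x..b, (t * v y + v' y) ^ 2 :=
        integral_nonneg hxb (fun y hy => sq_nonneg _)
      have hexp : (∫ y in x..b, (t * v y + v' y) ^ 2)
          = P * (t * t) + (2 * R) * t + Q := by
        have h1 : (∫ y in x..b, (t * v y + v' y) ^ 2)
            = ∫ y in x..b, (t ^ 2 * v y ^ 2 + ((2 * t) * (v y * v' y) + v' y ^ 2)) := by
          apply integral_congr; intro y hy; ring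
        rw [h1, integral_add ((hint _ hv2c x hx b hb).const_mul _)
            (((hint _ hvv'c x hx b hb).const_mul _).add (hint _ hv'2c x hx b hb)),
          integral_add ((hint _ hvv'c x hx b hb).const_mul _) (hint _ hv'2c x hx b hb),
          intervalIntegral.integral_const_mul, intervalIntegral.integral_const_mul]
        rw [hPdef, hQdef, hRdef]; ring
      linarith [hexp ▸ hnn]
    have hd := discrim_le_zero key
    rw [discrim] at hd
    nlinarith
  -- put everything together
  have hE0 : (0:ℝ) ≤ E := by linarith
  have hvx : v x ^ 2 = - (2 * R) := by
    have h2R : (∫ y in x..b, 2 * v y * v' y) = 2 * R := by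
      rw [hRdef, ← intervalIntegral.integral_const_mul]
      apply integral_congr; intro y hy; ring
    linarith [hftc, h2R]
  have habsR : |R| ≤ Real.sqrt P * Real.sqrt Q := by
    rw [← Real.sqrt_sq_eq_abs, ← Real.sqrt_mul hPnn]
    exact Real.sqrt_le_sqrt hCS
  have hstep1 : v x ^ 2 ≤ 2 * (Real.sqrt P * Real.sqrt Q) := by
    rw [hvx]
    linarith [neg_abs_le R, habsR]
  have hstep2 : Real.sqrt P * Real.sqrt Q ≤ Real.sqrt (E / m) * Real.sqrt E := by
    apply mul_le_mul (Real.sqrt_le_sqrt hPle) (Real.sqrt_le_sqrt hQE)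
      (Real.sqrt_nonneg _) (Real.sqrt_nonneg _)
  have hfin : Real.sqrt (E / m) * Real.sqrt E = E / Real.sqrt m := by
    rw [← Real.sqrt_mul (div_nonneg hE0 hmpos.le)]
    have : E / m * E = E ^ 2 / m := by ring
    rw [this, Real.sqrt_div (sq_nonneg E), Real.sqrt_sq hE0]
  have : v x ^ 2 ≤ 2 * (E / Real.sqrt m) := by
    rw [← hfin]
    linarith [hstep1, hstep2]
  calc v x ^ 2 ≤ 2 * (E / Real.sqrt m) := this
    _ = 2 * E / Real.sqrt m := by ring
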